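/- Let U be an n×n unitary complex matrix with symmetric support (U i j ≠ 0 ↔ U j i ≠ 0), and let G be the simple graph with G.Adj i j ↔ (i ≠ j ∧ U i j ≠ 0). If G is connected and has at least 3 vertices, then for every pair of distinct vertices u and v there exists a cycle in G containing both u and v (a closed walk that is a cycle and whose support contains both u and v). -/

import Mathlib

open SimpleGraph

section Helpers

variable {V : Type*} [DecidableEq V] {G : SimpleGraph V}

/-- From a walk avoiding nothing, produce a walk avoiding `w`, assuming every pair of
nonadjacent vertices with a common neighbor `w` has another common neighbor. -/
lemma avoid_aux
    (Hcn : ∀ i j w : V, i ≠ j → ¬ G.Adj i j → G.Adj w i → G.Adj w j →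
      ∃ k, k ≠ w ∧ G.Adj k i ∧ G.Adj k j) :
    ∀ (N : ℕ) {a v w : V}, a ≠ w → v ≠ w → ∀ q : G.Walk a v, q.length ≤ N →
      ∃ p : G.Walk a v, w ∉ p.support := by
  intro N
  induction N with
  | zero =>
    intro a v w ha _ q hq
    refine ⟨q, fun hw => ?_⟩
    have hlen : q.support.length = 1 := by
      rw [Walk.length_support]; omega
    have htl : q.support.tail.length = 0 := by
      rw [List.length_tail, hlen]
    rw [List.length_eq_zero_iff] at htl
    rw [q.support_eq_cons, htl, List.mem_cons] at hw
    rcases hw with hw | hw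
    · exact ha hw.symm
    · simp at hw
  | succ N ih =>
    intro a v w ha hv q hq
    by_cases hw : w ∈ q.support
    · obtain ⟨b, hwb, s, hs⟩ := Walk.exists_eq_cons_of_ne (Ne.symm hv) (q.dropUntil w hw)
      obtain ⟨a', hwa', r, hr⟩ :=
        Walk.exists_eq_cons_of_ne (Ne.symm ha) (q.takeUntil w hw).reverse
      -- w not in r
      have hcount : (q.takeUntil w hw).support.count w = 1 :=
        Walk.count_support_takeUntil_eq_one q hw
      have hcr : (q.takeUntil w hw).reverse.support.count w = 1 := by
        rw [Walk.support_reverse, List.count_reverse]; exact hcount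
      rw [hr] at hcr
      simp [Walk.support_cons] at hcr
      have hwr : w ∉ r.support := by
        rw [← List.count_eq_zero]
        omega
      -- lengths
      have hlsplit : (q.takeUntil w hw).length + (q.dropUntil w hw).length = q.length := by
        have := congrArg Walk.length (Walk.take_spec q hw)
        rwa [Walk.length_append] at this
      have hl1 : (q.takeUntil w hw).length = r.length + 1 := by
        have := congrArg Walk.length hr
        simpa [Walk.length_reverse] using this
      have hl2 : (q.dropUntil w hw).length = s.length + 1 := by
        rw [hs]; simp
      have hsN : s.length ≤ N := by omega
      have hbw : b ≠ w := (G.ne_of_adj hwb).symm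
      have haw' : a' ≠ w := (G.ne_of_adj hwa').symm
      obtain ⟨s', hs'⟩ := ih hbw hv s hsN
      have hwrr : w ∉ r.reverse.support := by
        rw [Walk.support_reverse, List.mem_reverse]; exact hwr
      by_cases hab : a' = b
      · subst hab
        refine ⟨r.reverse.append s', fun hmem => ?_⟩
        rw [Walk.mem_support_append_iff] at hmem
        exact hmem.elim hwrr hs'
      · by_cases hadj : G.Adj a' b
        · refine ⟨r.reverse.append (Walk.cons hadj s'), fun hmem => ?_⟩
          rw [Walk.mem_support_append_iff] at hmem
          rcases hmem with hmem | hmem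
          · exact hwrr hmem
          · rw [Walk.support_cons, List.mem_cons] at hmem
            rcases hmem with hmem | hmem
            · exact haw' hmem.symm
            · exact hs' hmem
        · obtain ⟨k, hkw, hka, hkb⟩ := Hcn a' b w hab hadj hwa' hwb
          refine ⟨r.reverse.append (Walk.cons hka.symm (Walk.cons hkb s')), fun hmem => ?_⟩
          rw [Walk.mem_support_append_iff] at hmem
          rcases hmem with hmem | hmem
          · exact hwrr hmem
          · rw [Walk.support_cons, Walk.support_cons, List.mem_cons, List.mem_cons] at hmem
            rcases hmem with hmem | hmem | hmem
            · exact haw' hmem.symm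
            · exact hkw hmem.symm
            · exact hs' hmem
    · exact ⟨q, hw⟩

lemma avoid
    (Hcn : ∀ i j w : V, i ≠ j → ¬ G.Adj i j → G.Adj w i → G.Adj w j →
      ∃ k, k ≠ w ∧ G.Adj k i ∧ G.Adj k j)
    {a v w : V} (ha : a ≠ w) (hv : v ≠ w) (q : G.Walk a v) :
    ∃ p : G.Walk a v, p.IsPath ∧ w ∉ p.support := by
  obtain ⟨p, hp⟩ := avoid_aux Hcn q.length ha hv q le_rfl
  exact ⟨p.bypass, p.bypass_isPath, fun h => hp (p.support_bypass_subset h)⟩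

/-- First contact of a path with a list of vertices (the end of the path is in the list). -/
lemma first_contact (L : List V) :
    ∀ {v u : V} (q : G.Walk v u), q.IsPath → u ∈ L →
      ∃ (x : V) (r : G.Walk v x), r.IsPath ∧ x ∈ L ∧ (∀ y ∈ r.support, y ∈ L → y = x) ∧
        ∀ y ∈ r.support, y ∈ q.support := by
  intro v u q
  induction q with
  | nil =>
    intro _ hu
    exact ⟨_, Walk.nil, Walk.IsPath.nil, hu, by simp, by simp⟩
  | @cons a b u hadj q' ih =>
    intro hq hu
    by_cases hv : a ∈ L
    · refine ⟨a, Walk.nil, Walk.IsPath.nil, hv, by simp, by simp⟩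
    · obtain ⟨x, r, hr, hxL, honly, hsub⟩ := ih hq.of_cons hu
      have haq' : a ∉ q'.support := ((Walk.cons_isPath_iff hadj q').mp hq).2
      refine ⟨x, Walk.cons hadj r, hr.cons (fun hc => haq' (hsub _ hc)), hxL, ?_, ?_⟩
      · intro y hy hyL
        rw [Walk.support_cons, List.mem_cons] at hy
        rcases hy with hy | hy
        · exact absurd (hy ▸ hyL) hv
        · exact honly y hy hyL
      · intro y hy
        rw [Walk.support_cons, List.mem_cons] at hy
        rw [Walk.support_cons, List.mem_cons]
        rcases hy with hy | hy
        · exact Or.inl hy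
        · exact Or.inr (hsub y hy)

lemma mem_rotate {c w : V} {C : G.Walk c c} (h : w ∈ C.support) {x : V} :
    x ∈ (C.rotate w h).support ↔ x ∈ C.support := by
  show x ∈ ((C.dropUntil w h).append (C.takeUntil w h)).support ↔ _
  rw [Walk.mem_support_append_iff]
  conv_rhs => rw [← Walk.take_spec C h]
  rw [Walk.mem_support_append_iff]
  exact or_comm

lemma concat_isPath {a b c : V} {P : G.Walk a b} (hP : P.IsPath) (h : G.Adj b c)
    (hc : c ∉ P.support) : (P.concat h).IsPath := by
  rw [← Walk.isPath_reverse_iff, Walk.reverse_concat]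
  exact hP.reverse.cons (by simpa [Walk.support_reverse] using hc)

/-- The main graph-theoretic lemma: given the two auxiliary properties, any two
distinct vertices joined by a path lie on a common cycle. -/
lemma cycle_through
    (Hav : ∀ a v w : V, a ≠ w → v ≠ w → ∃ p : G.Walk a v, p.IsPath ∧ w ∉ p.support)
    (Hx : ∀ u v : V, G.Adj u v → ∃ x, x ≠ u ∧ x ≠ v ∧ (G.Adj x u ∨ G.Adj x v)) :
    ∀ (N : ℕ) (u v : V), u ≠ v → ∀ p : G.Walk u v, p.IsPath → p.length ≤ N →
      ∃ (c : V) (C : G.Walk c c), C.IsCycle ∧ u ∈ C.support ∧ v ∈ C.support := by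
  intro N
  induction N with
  | zero =>
    intro u v huv p _ hl
    exact absurd (Walk.eq_of_length_eq_zero (Nat.le_zero.mp hl)) huv
  | succ N ih =>
    intro u v huv p hp hl
    obtain ⟨w, hvw, t, ht⟩ := Walk.exists_eq_cons_of_ne (Ne.symm huv) p.reverse
    have hp' : t.IsPath := by
      have := hp.reverse
      rw [ht] at this
      exact this.of_cons
    by_cases hwu : w = u
    · -- base case : u and v are adjacent
      have h : G.Adj u v := by rw [← hwu]; exact hvw.symm
      obtain ⟨x, hxu, hxv, hx | hx⟩ := Hx u v h
      · -- x adjacent to u : path from x to v avoiding u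
        obtain ⟨P, hPp, hPu⟩ := Hav x v u hxu (Ne.symm huv)
        refine ⟨u, Walk.cons hx.symm (P.concat h.symm), ?_, Walk.start_mem_support _, ?_⟩
        · rw [Walk.cons_isCycle_iff]
          constructor
          · exact concat_isPath hPp h.symm hPu
          · intro he
            rw [Walk.edges_concat, List.concat_eq_append, List.mem_append] at he
            rcases he with he | he
            · exact hPu (Walk.fst_mem_support_of_mem_edges P he)
            · simp only [List.mem_singleton, Sym2.eq_iff] at he
              rcases he with ⟨h1, _⟩ | ⟨_, h2⟩
              · exact huv h1
              · exact hxv h2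
        · rw [Walk.support_cons, List.mem_cons]
          right
          rw [Walk.support_concat, List.mem_append]
          exact Or.inl P.end_mem_support
      · -- x adjacent to v : path from x to u avoiding v
        obtain ⟨P, hPp, hPv⟩ := Hav x u v hxv huv
        refine ⟨v, Walk.cons hx.symm (P.concat h), ?_, ?_, Walk.start_mem_support _⟩
        · rw [Walk.cons_isCycle_iff]
          constructor
          · exact concat_isPath hPp h hPv
          · intro he
            rw [Walk.edges_concat, List.concat_eq_append, List.mem_append] at he
            rcases he with he | he
            · exact hPv (Walk.fst_mem_support_of_mem_edges P he)
            · simp only [List.mem_singleton, Sym2.eq_iff] at he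
              rcases he with ⟨h1, _⟩ | ⟨_, h2⟩
              · exact huv h1.symm
              · exact hxu h2
        · rw [Walk.support_cons, List.mem_cons]
          right
          rw [Walk.support_concat, List.mem_append]
          exact Or.inl P.end_mem_support
    · -- inductive step
      have hlt : t.length ≤ N := by
        have h1 : p.reverse.length = t.length + 1 := by rw [ht]; simp
        rw [Walk.length_reverse] at h1
        omega
      obtain ⟨c, C₀, hC₀, hwC₀, huC₀⟩ := ih w u hwu t hp' hlt
      by_cases hvC : v ∈ C₀.support
      · exact ⟨c, C₀, hC₀, huC₀, hvC⟩
      · -- rotate the cycle to start at w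
        have hC : (C₀.rotate w hwC₀).IsCycle := hC₀.rotate hwC₀
        have hu : u ∈ (C₀.rotate w hwC₀).support := (mem_rotate hwC₀).mpr huC₀
        have hv' : v ∉ (C₀.rotate w hwC₀).support := fun h => hvC ((mem_rotate hwC₀).mp h)
        obtain ⟨w₁, h₀, D, hCeq⟩ := Walk.not_nil_iff.mp hC.not_nil
        rw [hCeq] at hC hu hv'
        have hD : D.IsPath ∧ s(w, w₁) ∉ D.edges := (Walk.cons_isCycle_iff D h₀).mp hC
        -- path from v to u avoiding w
        obtain ⟨q, hqp, hqw⟩ := Hav v u w (G.ne_of_adj hvw) (Ne.symm hwu)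
        obtain ⟨x, P, hPp, hxC, honly, hsub⟩ :=
          first_contact ((Walk.cons h₀ D).support) q hqp hu
        have hwP : w ∉ P.support := fun h => hqw (hsub _ h)
        have hxw : x ≠ w := fun h => hwP (h ▸ P.end_mem_support)
        have hxD : x ∈ D.support := by
          rw [Walk.support_cons, List.mem_cons] at hxC
          rcases hxC with h | h
          · exact absurd h hxw
          · exact h
        have hsplit : D.support = (D.takeUntil x hxD).support
            ++ (D.dropUntil x hxD).support.tail := by
          conv_lhs => rw [← Walk.take_spec D hxD]
          rw [Walk.support_append]
        have huD : u ∈ D.support := by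
          rw [Walk.support_cons, List.mem_cons] at hu
          rcases hu with h | h
          · exact absurd h.symm hwu
          · exact h
        -- the arc B from w to x through u
        obtain ⟨B, hBpath, huB, hBs⟩ : ∃ B : G.Walk w x, B.IsPath ∧ u ∈ B.support ∧
            ∀ y ∈ B.support, y ∈ (Walk.cons h₀ D).support := by
          rw [hsplit, List.mem_append] at huD
          rcases huD with huD | huD
          · -- u is in the first arc; B := cons h₀ D₁
            have hwD2 : w ∈ (D.dropUntil x hxD).support.tail := by
              have h1 := (D.dropUntil x hxD).end_mem_support
              rw [(D.dropUntil x hxD).support_eq_cons, List.mem_cons] at h1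
              rcases h1 with h1 | h1
              · exact absurd h1.symm hxw
              · exact h1
            have hdisj := (List.nodup_append.mp (hsplit ▸ hD.1.support_nodup)).2.2
            have hwD1 : w ∉ (D.takeUntil x hxD).support := fun h => hdisj w h w hwD2 rfl
            refine ⟨Walk.cons h₀ (D.takeUntil x hxD), (hD.1.takeUntil hxD).cons hwD1, ?_, ?_⟩
            · rw [Walk.support_cons, List.mem_cons]; exact Or.inr huD
            · intro y hy
              rw [Walk.support_cons, List.mem_cons] at hy
              rw [Walk.support_cons, List.mem_cons]
              rcases hy with hy | hy
              · exact Or.inl hy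
              · exact Or.inr (Walk.support_takeUntil_subset D hxD hy)
          · -- u is in the second arc; B := (D.dropUntil x hxD).reverse
            have huD2 : u ∈ (D.dropUntil x hxD).support := by
              rw [(D.dropUntil x hxD).support_eq_cons]
              exact List.mem_cons_of_mem _ huD
            refine ⟨(D.dropUntil x hxD).reverse, (hD.1.dropUntil hxD).reverse, ?_, ?_⟩
            · rw [Walk.support_reverse, List.mem_reverse]; exact huD2
            · intro y hy
              rw [Walk.support_reverse, List.mem_reverse] at hy
              rw [Walk.support_cons, List.mem_cons]
              exact Or.inr (Walk.support_dropUntil_subset D hxD hy)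
        -- assemble the cycle
        have hxtail : x ∉ P.reverse.support.tail := by
          have := hPp.reverse.support_nodup
          rw [P.reverse.support_eq_cons] at this
          exact (List.nodup_cons.mp this).1
        have hBP : (B.append P.reverse).IsPath := by
          rw [Walk.isPath_def, Walk.support_append, List.nodup_append]
          refine ⟨hBpath.support_nodup, ?_, ?_⟩
          · have := hPp.reverse.support_nodup
            rw [P.reverse.support_eq_cons] at this
            exact (List.nodup_cons.mp this).2
          · intro y hyB y' hyT hyy
            subst hyy
            have hyP : y ∈ P.reverse.support := by
              rw [P.reverse.support_eq_cons]
              exact List.mem_cons_of_mem _ hyT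
            rw [Walk.support_reverse, List.mem_reverse] at hyP
            have : y = x := honly y hyP (hBs y hyB)
            exact hxtail (this ▸ hyT)
        refine ⟨v, Walk.cons hvw (B.append P.reverse), ?_, ?_, Walk.start_mem_support _⟩
        · rw [Walk.cons_isCycle_iff]
          refine ⟨hBP, fun he => ?_⟩
          rw [Walk.edges_append, List.mem_append] at he
          rcases he with he | he
          · exact hv' (hBs v (Walk.fst_mem_support_of_mem_edges B he))
          · rw [Walk.edges_reverse, List.mem_reverse] at he
            exact hwP (Walk.snd_mem_support_of_mem_edges P he)
        · rw [Walk.support_cons, List.mem_cons]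
          exact Or.inr ((Walk.mem_support_append_iff _ _).mpr (Or.inl huB))

lemma third_vertex {v : V} {z u : V} (q : G.Walk z u) : z ≠ u → z ≠ v →
    ∃ x, x ≠ u ∧ x ≠ v ∧ (G.Adj x u ∨ G.Adj x v) := by
  induction q with
  | nil => intro h _; exact absurd rfl h
  | @cons a b c hadj q' ih =>
    intro hzu hzv
    by_cases hbu : b = c
    · exact ⟨a, hzu, hzv, Or.inl (hbu ▸ hadj)⟩
    · by_cases hbv : b = v
      · exact ⟨a, hzu, hzv, Or.inr (hbv ▸ hadj)⟩
      · exact ih hbu hbv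

end Helpers

/-- In the graph of a unitary matrix, if the graph is connected and has at least 3
vertices, then any two distinct vertices lie on a common cycle. -/
theorem stmt_7 (n : ℕ) (U : Matrix (Fin n) (Fin n) ℂ)
    (hU : U ∈ Matrix.unitaryGroup (Fin n) ℂ)
    (hsym : ∀ i j, U i j ≠ 0 ↔ U j i ≠ 0)
    (G : SimpleGraph (Fin n)) (hG : ∀ i j, G.Adj i j ↔ i ≠ j ∧ U i j ≠ 0)
    (hconn : G.Connected) (hcard : 3 ≤ n) :
    ∀ u v : Fin n, u ≠ v →
      ∃ (w : Fin n) (c : G.Walk w w), c.IsCycle ∧ u ∈ c.support ∧ v ∈ c.support := by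
  classical
  -- the key "common neighbor" property coming from unitarity
  have Hcn : ∀ i j w : Fin n, i ≠ j → ¬ G.Adj i j → G.Adj w i → G.Adj w j →
      ∃ k, k ≠ w ∧ G.Adj k i ∧ G.Adj k j := by
    intro i j w hij hnadj hwi hwj
    by_contra hk
    push_neg at hk
    have hU1 : U * star U = 1 := Matrix.mem_unitaryGroup_iff.mp hU
    have h0 : (U * star U) i j = 0 := by
      rw [hU1, Matrix.one_apply_ne hij]
    rw [Matrix.mul_apply] at h0
    have hUji : U j i = 0 := by
      by_contra h
      exact hnadj ((hG i j).mpr ⟨hij, (hsym i j).mpr h⟩)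
    have hUij : U i j = 0 := by
      by_contra h
      exact hnadj ((hG i j).mpr ⟨hij, h⟩)
    have hterm : ∀ b : Fin n, b ∈ Finset.univ → b ≠ w → U i b * (star U) b j = 0 := by
      intro b _ hbw
      rw [Matrix.star_apply]
      by_cases hbi : b = i
      · subst hbi
        rw [hUji, star_zero, mul_zero]
      · by_cases hbj : b = j
        · subst hbj
          rw [hUij, zero_mul]
        · by_cases hadj1 : G.Adj b i
          · have h2 : ¬ G.Adj b j := hk b hbw hadj1
            have hbj0 : U b j = 0 := by
              by_contra hne
              exact h2 ((hG b j).mpr ⟨hbj, hne⟩)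
            have hjb0 : U j b = 0 := by
              by_contra hne
              exact absurd hbj0 ((hsym j b).mp hne)
            rw [hjb0, star_zero, mul_zero]
          · have hbi0 : U b i = 0 := by
              by_contra hne
              exact hadj1 ((hG b i).mpr ⟨hbi, hne⟩)
            have hib0 : U i b = 0 := by
              by_contra hne
              exact absurd hbi0 ((hsym i b).mp hne)
            rw [hib0, zero_mul]
    have hsum := Finset.sum_eq_single w hterm (fun h => absurd (Finset.mem_univ w) h)
    rw [h0] at hsum
    -- but the w-term is nonzero
    have hUiw : U i w ≠ 0 := (hsym w i).mp ((hG w i).mp hwi).2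
    have hUjw : U j w ≠ 0 := (hsym w j).mp ((hG w j).mp hwj).2
    have : U i w * (star U) w j ≠ 0 := by
      rw [Matrix.star_apply]
      exact mul_ne_zero hUiw (by simpa using hUjw)
    exact this hsum.symm
  -- each edge has a third vertex adjacent to one of its endpoints
  have Hx : ∀ u v : Fin n, G.Adj u v → ∃ x, x ≠ u ∧ x ≠ v ∧ (G.Adj x u ∨ G.Adj x v) := by
    intro u v _
    have hz : ∃ z : Fin n, z ≠ u ∧ z ≠ v := by
      by_contra h
      push_neg at h
      have hsub : (Finset.univ : Finset (Fin n)) ⊆ {u, v} := by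
        intro z _
        rcases eq_or_ne z u with hz | hz
        · simp [hz]
        · simp [h z hz]
      have hle := Finset.card_le_card hsub
      have h2 : ({u, v} : Finset (Fin n)).card ≤ 2 :=
        le_trans (Finset.card_insert_le _ _) (by simp)
      rw [Finset.card_univ, Fintype.card_fin] at hle
      omega
    obtain ⟨z, hzu, hzv⟩ := hz
    obtain ⟨q⟩ := hconn.preconnected z u
    exact third_vertex q hzu hzv
  have Hav : ∀ a v w : Fin n, a ≠ w → v ≠ w → ∃ p : G.Walk a v, p.IsPath ∧ w ∉ p.support := by
    intro a v w ha hv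
    obtain ⟨q⟩ := hconn.preconnected a v
    exact avoid Hcn ha hv q
  intro u v huv
  obtain ⟨q⟩ := hconn.preconnected u v
  exact cycle_through Hav Hx q.bypass.length u v huv q.bypass q.bypass_isPath le_rfl
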